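/- Let X be a compact metric space of covering dimension at most n and let Y be a metric 2-point identification of X. Then Y has covering dimension at most n. -/

import Mathlib

/-- Covering dimension at most `n`: every open cover admits an open shrinking
(refinement) of order at most `n + 1`. -/
def CovDimLE (X : Type) [TopologicalSpace X] (n : ℕ) : Prop :=
  ∀ (ι : Type) (U : ι → Set X), (∀ i, IsOpen (U i)) → (⋃ i, U i) = Set.univ →
    ∃ V : ι → Set X, (∀ i, IsOpen (V i)) ∧ (∀ i, V i ⊆ U i) ∧ (⋃ i, V i) = Set.univ ∧
      ∀ x : X, {i | x ∈ V i}.Finite ∧ {i | x ∈ V i}.ncard ≤ n + 1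

/-- `f : X → Y` realizes `Y` as the metric 2-point identification of `X` at the pair
`p ≠ q`: it is surjective, identifies exactly `p` and `q`, and `Y` carries the
quotient metric. -/
def IsMetricTwoPointIdentification {X Y : Type} [MetricSpace X] [MetricSpace Y]
    (p q : X) (f : X → Y) : Prop :=
  p ≠ q ∧ Function.Surjective f ∧ f p = f q ∧
    (∀ a b : X, f a = f b → a = b ∨ ({a, b} : Set X) = {p, q}) ∧
    ∀ a b : X, dist (f a) (f b) =
      min (dist a b) (min (dist a p + dist q b) (dist a q + dist p b))

/-- A metric 2-point identification of a compact metric space of covering dimension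
at most `n` has covering dimension at most `n`. -/
theorem covDim_le_of_metric_two_point_identification
    (X Y : Type) [MetricSpace X] [MetricSpace Y] [CompactSpace X]
    (n : ℕ) (hX : CovDimLE X n) (p q : X) (f : X → Y)
    (hf : IsMetricTwoPointIdentification p q f) :
    CovDimLE Y n := by
  classical
  obtain ⟨hpq, hsurj, hfpq, hinj, hdist⟩ := hf
  -- f is 1-Lipschitz, hence continuous
  have hcont : Continuous f := by
    have hl : LipschitzWith 1 f := LipschitzWith.of_dist_le_mul (fun a b => by
      rw [hdist a b]; simp)
    exact hl.continuous
  intro ι U hUopen hUcover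
  set W : ι → Set X := fun i => f ⁻¹' (U i) with hWdef
  have hWopen : ∀ i, IsOpen (W i) := fun i => (hUopen i).preimage hcont
  have hWcover : (⋃ i, W i) = Set.univ := by
    ext x
    simp only [Set.mem_iUnion, Set.mem_univ, iff_true]
    have : f x ∈ ⋃ i, U i := hUcover ▸ Set.mem_univ _
    obtain ⟨i, hi⟩ := Set.mem_iUnion.1 this
    exact ⟨i, hi⟩
  have hWsat : ∀ i, p ∈ W i ↔ q ∈ W i := by
    intro i
    simp only [hWdef, Set.mem_preimage, hfpq]
  -- choose an index i0 whose set contains both p and q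
  obtain ⟨i0, hpi0⟩ : ∃ i, p ∈ W i := by
    have : p ∈ ⋃ i, W i := hWcover ▸ Set.mem_univ _
    simpa using this
  have hqi0 : q ∈ W i0 := (hWsat i0).1 hpi0
  -- a closed-ball neighborhood of {p, q} inside W i0
  obtain ⟨rp, hrp0, hrp⟩ : ∃ r > 0, Metric.closedBall p r ⊆ W i0 :=
    (Metric.nhds_basis_closedBall.mem_iff).1 ((hWopen i0).mem_nhds hpi0)
  obtain ⟨rq, hrq0, hrq⟩ : ∃ r > 0, Metric.closedBall q r ⊆ W i0 :=
    (Metric.nhds_basis_closedBall.mem_iff).1 ((hWopen i0).mem_nhds hqi0)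
  set r : ℝ := min rp rq with hrdef
  have hr0 : 0 < r := lt_min hrp0 hrq0
  set K : Set X := Metric.closedBall p r ∪ Metric.closedBall q r with hKdef
  have hKW : K ⊆ W i0 := by
    refine Set.union_subset ?_ ?_
    · exact (Metric.closedBall_subset_closedBall (min_le_left _ _)).trans hrp
    · exact (Metric.closedBall_subset_closedBall (min_le_right _ _)).trans hrq
  have hpK : p ∈ K := Or.inl (Metric.mem_closedBall_self hr0.le)
  have hqK : q ∈ K := Or.inr (Metric.mem_closedBall_self hr0.le)
  -- modified cover of X where only the i0-th set meets {p, q}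
  set W' : ι → Set X := fun i => if i = i0 then W i0 else W i \ K with hW'def
  have hW'open : ∀ i, IsOpen (W' i) := by
    intro i
    simp only [hW'def]
    split
    · exact hWopen i0
    · exact (hWopen i).sdiff (Metric.isClosed_closedBall.union Metric.isClosed_closedBall)
  have hW'cover : (⋃ i, W' i) = Set.univ := by
    ext x
    simp only [Set.mem_iUnion, Set.mem_univ, iff_true]
    by_cases hxK : x ∈ K
    · exact ⟨i0, by simp [hW'def, hKW hxK]⟩
    · obtain ⟨i, hi⟩ : ∃ i, x ∈ W i := by
        have : x ∈ ⋃ i, W i := hWcover ▸ Set.mem_univ _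
        simpa using this
      refine ⟨i, ?_⟩
      simp only [hW'def]
      split
      · next h => exact h ▸ hi
      · exact ⟨hi, hxK⟩
  have hW'W : ∀ i, W' i ⊆ W i := by
    intro i x hx
    simp only [hW'def] at hx
    rcases eq_or_ne i i0 with h | h
    · simpa [h] using hx
    · simp only [if_neg h] at hx; exact hx.1
  -- apply the dimension hypothesis
  obtain ⟨V, hVopen, hVsub, hVcover, hVord⟩ := hX ι W' hW'open hW'cover
  -- p and q lie only in V i0
  have hpV : ∀ i, p ∈ V i → i = i0 := by
    intro i hi
    by_contra h
    have := hVsub i hi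
    simp only [hW'def, if_neg h] at this
    exact this.2 hpK
  have hqV : ∀ i, q ∈ V i → i = i0 := by
    intro i hi
    by_contra h
    have := hVsub i hi
    simp only [hW'def, if_neg h] at this
    exact this.2 hqK
  have hpVi0 : p ∈ V i0 := by
    obtain ⟨i, hi⟩ : ∃ i, p ∈ V i := by
      have : p ∈ ⋃ i, V i := hVcover ▸ Set.mem_univ _
      simpa using this
    exact hpV i hi ▸ hi
  have hqVi0 : q ∈ V i0 := by
    obtain ⟨i, hi⟩ : ∃ i, q ∈ V i := by
      have : q ∈ ⋃ i, V i := hVcover ▸ Set.mem_univ _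
      simpa using this
    exact hqV i hi ▸ hi
  -- small balls around p and q inside V i0
  obtain ⟨ep, hep0, hep⟩ : ∃ e > 0, Metric.ball p e ⊆ V i0 :=
    Metric.isOpen_iff.1 (hVopen i0) p hpVi0
  obtain ⟨eq', heq0, heq⟩ : ∃ e > 0, Metric.ball q e ⊆ V i0 :=
    Metric.isOpen_iff.1 (hVopen i0) q hqVi0
  set ε' : ℝ := min ep eq' with hε'def
  have hε'0 : 0 < ε' := lt_min hep0 heq0
  have hballp : Metric.ball p ε' ⊆ V i0 :=
    (Metric.ball_subset_ball (min_le_left _ _)).trans hep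
  have hballq : Metric.ball q ε' ⊆ V i0 :=
    (Metric.ball_subset_ball (min_le_right _ _)).trans heq
  set ε : ℝ := ε' / 2 with hεdef
  have hε0 : 0 < ε := by positivity
  have hεε' : ε < ε' := by simp only [hεdef]; linarith
  -- the surgered shrinking on X
  set V' : ι → Set X := fun i =>
    (V i \ (Metric.closedBall p ε ∪ Metric.closedBall q ε)) ∪
      (if i = i0 then Metric.ball p ε' ∪ Metric.ball q ε' else ∅) with hV'def
  have hV'open : ∀ i, IsOpen (V' i) := by
    intro i
    refine IsOpen.union ((hVopen i).sdiff
      (Metric.isClosed_closedBall.union Metric.isClosed_closedBall)) ?_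
    split
    · exact Metric.isOpen_ball.union Metric.isOpen_ball
    · exact isOpen_empty
  have hV'V : ∀ i, V' i ⊆ V i := by
    intro i x hx
    rcases hx with hx | hx
    · exact hx.1
    · rcases eq_or_ne i i0 with h | h
      · subst h
        simp only [if_pos rfl] at hx
        rcases hx with hx | hx
        · exact hballp hx
        · exact hballq hx
      · simp [if_neg h] at hx
  have hV'cover : (⋃ i, V' i) = Set.univ := by
    ext x
    simp only [Set.mem_iUnion, Set.mem_univ, iff_true]
    by_cases hxp : x ∈ Metric.closedBall p ε
    · refine ⟨i0, Or.inr ?_⟩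
      simp only [if_pos rfl]
      exact Or.inl (lt_of_le_of_lt (Metric.mem_closedBall.1 hxp) hεε')
    · by_cases hxq : x ∈ Metric.closedBall q ε
      · refine ⟨i0, Or.inr ?_⟩
        simp only [if_pos rfl]
        exact Or.inr (lt_of_le_of_lt (Metric.mem_closedBall.1 hxq) hεε')
      · obtain ⟨i, hi⟩ : ∃ i, x ∈ V i := by
          have : x ∈ ⋃ i, V i := hVcover ▸ Set.mem_univ _
          simpa using this
        exact ⟨i, Or.inl ⟨hi, fun h => h.elim hxp hxq⟩⟩
  -- saturation: p ∈ V' i ↔ i = i0 ↔ q ∈ V' i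
  have hpV' : ∀ i, p ∈ V' i ↔ i = i0 := by
    intro i
    constructor
    · intro h
      rcases h with h | h
      · exact absurd (Or.inl (Metric.mem_closedBall_self hε0.le)) h.2
      · by_contra hne
        simp [if_neg hne] at h
    · rintro rfl
      exact Or.inr (by rw [if_pos rfl]; exact Or.inl (Metric.mem_ball_self hε'0))
  have hqV' : ∀ i, q ∈ V' i ↔ i = i0 := by
    intro i
    constructor
    · intro h
      rcases h with h | h
      · exact absurd (Or.inr (Metric.mem_closedBall_self hε0.le)) h.2
      · by_contra hne
        simp [if_neg hne] at h
    · rintro rfl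
      exact Or.inr (by rw [if_pos rfl]; exact Or.inr (Metric.mem_ball_self hε'0))
  -- images of saturated open sets are open
  have himg_open : ∀ S : Set X, IsOpen S → (p ∈ S ↔ q ∈ S) → IsOpen (f '' S) := by
    intro S hS hsat
    have hkey : f '' S = (f '' Sᶜ)ᶜ := by
      ext y
      constructor
      · rintro ⟨a, ha, rfl⟩ ⟨b, hb, hab⟩
        rcases hinj b a hab with h | h
        · exact hb (h ▸ ha)
        · rcases Set.pair_eq_pair_iff.1 h with ⟨h1, h2⟩ | ⟨h1, h2⟩
          · subst h1; subst h2; exact hb (hsat.2 ha)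
          · subst h1; subst h2; exact hb (hsat.1 ha)
      · intro hy
        obtain ⟨x, rfl⟩ := hsurj y
        by_cases hx : x ∈ S
        · exact ⟨x, hx, rfl⟩
        · exact absurd ⟨x, hx, rfl⟩ hy
    rw [hkey, isOpen_compl_iff]
    exact ((hS.isClosed_compl.isCompact).image hcont).isClosed
  -- the shrinking of U
  refine ⟨fun i => f '' V' i, ?_, ?_, ?_, ?_⟩
  · intro i
    refine himg_open _ (hV'open i) ?_
    rw [hpV' i, hqV' i]
  · intro i
    refine (Set.image_mono ?_).trans (Set.image_preimage_subset f (U i))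
    exact fun x hx => (hW'W i) (hVsub i (hV'V i hx))
  · ext y
    simp only [Set.mem_iUnion, Set.mem_univ, iff_true]
    obtain ⟨x, rfl⟩ := hsurj y
    obtain ⟨i, hi⟩ : ∃ i, x ∈ V' i := by
      have : x ∈ ⋃ i, V' i := hV'cover ▸ Set.mem_univ _
      simpa using this
    exact ⟨i, x, hi, rfl⟩
  · intro y
    obtain ⟨x, rfl⟩ := hsurj y
    by_cases hx : x = p ∨ x = q
    · -- the glued point: only the i0-th set contains it
      have hset : {i | f x ∈ f '' V' i} = {i0} := by
        ext i
        simp only [Set.mem_setOf_eq, Set.mem_singleton_iff]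
        constructor
        · rintro ⟨a, ha, hfa⟩
          have hfx : f a = f x := hfa
          rcases hinj a x hfx with h | h
          · rcases hx with rfl | rfl
            · exact (hpV' i).1 (h ▸ ha)
            · exact (hqV' i).1 (h ▸ ha)
          · rcases Set.pair_eq_pair_iff.1 h with ⟨h1, _⟩ | ⟨h1, _⟩
            · exact (hpV' i).1 (h1 ▸ ha)
            · exact (hqV' i).1 (h1 ▸ ha)
        · rintro rfl
          refine ⟨p, (hpV' _).2 rfl, ?_⟩
          rcases hx with rfl | rfl
          · rfl
          · exact hfpq
      rw [hset]
      exact ⟨Set.finite_singleton _, by simp⟩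
    · -- a regular point: its fiber is {x}
      push_neg at hx
      have hset : {i | f x ∈ f '' V' i} = {i | x ∈ V' i} := by
        ext i
        simp only [Set.mem_setOf_eq]
        constructor
        · rintro ⟨a, ha, hfa⟩
          rcases hinj a x hfa with h | h
          · exact h ▸ ha
          · rcases Set.pair_eq_pair_iff.1 h with ⟨_, h2⟩ | ⟨_, h2⟩
            · exact absurd h2 hx.2
            · exact absurd h2 hx.1
        · intro h
          exact ⟨x, h, rfl⟩
      rw [hset]
      have hsub : {i | x ∈ V' i} ⊆ {i | x ∈ V i} := fun i hi => hV'V i hi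
      refine ⟨(hVord x).1.subset hsub, ?_⟩
      exact le_trans (Set.ncard_le_ncard hsub (hVord x).1) (hVord x).2
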